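/- For the (non-convex) polynomials f₁(x₁,x₂) = f₂(x₁,x₂) = (x₁x₂ − 1)² + x₂² on ℝ², the bi-objective problem of minimizing (f₁, f₂) over K = ℝ² has no efficient solution, even though for every (z₁,z₂) ∈ ℝ² the set f(K) ∩ (f(z₁,z₂) − ℝ²_+) is nonempty and bounded. -/
import Mathlib

lemma fpos (x : ℝ × ℝ) : 0 < (x.1 * x.2 - 1)^2 + x.2^2 := by
  rcases eq_or_ne x.2 0 with h | h
  · simp [h]
  · have : 0 < x.2^2 := by positivity
    nlinarith [sq_nonneg (x.1 * x.2 - 1)]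

theorem stmt_5 (f : ℝ × ℝ → ℝ) (hf : f = fun x => (x.1 * x.2 - 1)^2 + x.2^2)
    (F : ℝ × ℝ → ℝ × ℝ) (hF : F = fun x => (f x, f x)) :
    (∀ z : ℝ × ℝ,
      (F '' Set.univ ∩ {w | w.1 ≤ f z ∧ w.2 ≤ f z}).Nonempty ∧
      Bornology.IsBounded (F '' Set.univ ∩ {w | w.1 ≤ f z ∧ w.2 ≤ f z})) ∧
    ¬ ∃ xb : ℝ × ℝ, ¬ ∃ x : ℝ × ℝ,
        (f x ≤ f xb ∧ f x ≤ f xb) ∧ (f x < f xb ∨ f x < f xb) := by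
  have hnn : ∀ x, 0 ≤ f x := by intro x; rw [hf]; positivity
  constructor
  · intro z
    constructor
    · exact ⟨F z, ⟨⟨z, Set.mem_univ z, rfl⟩, by simp [hF]⟩⟩
    · apply Bornology.IsBounded.subset (Bornology.IsBounded.prod
        (Metric.isBounded_Icc (0:ℝ) (f z)) (Metric.isBounded_Icc (0:ℝ) (f z)))
      rintro w ⟨⟨x, -, hx⟩, hw1, hw2⟩
      subst hF
      simp only at hx
      constructor
      · exact ⟨by rw [← hx]; exact hnn x, hw1⟩
      · exact ⟨by rw [← hx]; exact hnn x, hw2⟩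
  · rintro ⟨xb, hxb⟩
    have hc : 0 < f xb := by rw [hf]; exact fpos xb
    set c := f xb with hcdef
    have h2 : (0:ℝ) < Real.sqrt (c/2) := Real.sqrt_pos.2 (by linarith)
    refine hxb ⟨((Real.sqrt (c/2))⁻¹, Real.sqrt (c/2)), ?_⟩
    have hval : f ((Real.sqrt (c/2))⁻¹, Real.sqrt (c/2)) = c/2 := by
      rw [hf]
      simp only
      rw [inv_mul_cancel₀ (ne_of_gt h2)]
      rw [Real.sq_sqrt (by linarith : (0:ℝ) ≤ c/2)]
      ring
    rw [hval]
    exact ⟨⟨by linarith, by linarith⟩, Or.inl (by linarith)⟩
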